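/- arXiv:2304.04137 — 4 statements merged into one kernel-verified Lean document; each statement's English description precedes it below -/
import Mathlib

section
/- For any positive semi-definite n×n matrix L, the sum over all subsets A of {1,...,n} of det(L_A) equals det(L + I), where L_A is the principal submatrix of L with rows and columns indexed by A, and the determinant of the empty submatrix is 1. -/
open Matrix

lemma det_piecewise (n : ℕ) (L : Matrix (Fin n) (Fin n) ℝ) (A : Finset (Fin n)) :
    (Matrix.of (A.piecewise (fun i => L i) (fun i => (1 : Matrix (Fin n) (Fin n) ℝ) i))).det =
      (L.submatrix (Subtype.val : A → Fin n) (Subtype.val : A → Fin n)).det := by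
  classical
  set M : Matrix (Fin n) (Fin n) ℝ :=
    Matrix.of (A.piecewise (fun i => L i) (fun i => (1 : Matrix (Fin n) (Fin n) ℝ) i))
  let e : {i // i ∈ A} ⊕ {i // i ∉ A} ≃ Fin n := Equiv.sumCompl (· ∈ A)
  have h : M.submatrix e e =
      Matrix.fromBlocks
        (L.submatrix (Subtype.val : A → Fin n) (Subtype.val : A → Fin n))
        (L.submatrix (Subtype.val : A → Fin n) (Subtype.val : {i // i ∉ A} → Fin n))
        0 1 := by
    ext i j
    cases i with
    | inl i =>
      cases j with
      | inl j => simp [M, e, Finset.piecewise, i.2]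
      | inr j => simp [M, e, Finset.piecewise, i.2]
    | inr i =>
      cases j with
      | inl j =>
        have hij : (i : Fin n) ≠ (j : Fin n) := by
          intro h; exact i.2 (h ▸ j.2)
        simp [M, e, Finset.piecewise, i.2, Matrix.one_apply, hij]
      | inr j =>
        by_cases hij : (i : Fin n) = (j : Fin n)
        · have : i = j := Subtype.ext hij
          simp [M, e, Finset.piecewise, i.2, j.2, Matrix.one_apply, this]
        · have : i ≠ j := fun h => hij (congrArg Subtype.val h)
          simp [M, e, Finset.piecewise, i.2, Matrix.one_apply, hij, this]
  calc M.det = (M.submatrix e e).det := (Matrix.det_submatrix_equiv_self e M).symm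
    _ = _ := by rw [h, Matrix.det_fromBlocks_zero₂₁]; simp

theorem stmt_1 (n : ℕ) (L : Matrix (Fin n) (Fin n) ℝ) (hL : L.PosSemidef) :
    ∑ A : Finset (Fin n),
        (L.submatrix (Subtype.val : A → Fin n) (Subtype.val : A → Fin n)).det =
      (L + 1).det := by
  classical
  have key : (L + 1).det = ∑ s : Finset (Fin n),
      Matrix.detRowAlternating
        (s.piecewise (fun i => L i) (fun i => (1 : Matrix (Fin n) (Fin n) ℝ) i)) :=
    (Matrix.detRowAlternating :
      AlternatingMap ℝ (Fin n → ℝ) ℝ (Fin n)).map_add_univ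
      (fun i => L i) (fun i => (1 : Matrix (Fin n) (Fin n) ℝ) i)
  rw [key]
  refine Finset.sum_congr rfl fun A _ => ?_
  rw [← det_piecewise n L A]
  rfl
end

section
/- Hadamard's inequality for positive semi-definite matrices: if M is an n×n positive semi-definite real matrix, then det(M) ≤ Π_{i=1}^n M_{ii}. -/
open Matrix

-- trace of a real hermitian matrix is the sum of its eigenvalues
lemma aux_trace_eq_sum_eigenvalues {m : ℕ} {A : Matrix (Fin m) (Fin m) ℝ}
    (hA : A.IsHermitian) : A.trace = ∑ i, hA.eigenvalues i := by
  simpa using hA.trace_eq_sum_eigenvalues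

lemma aux_diag_nonneg {m : ℕ} {A : Matrix (Fin m) (Fin m) ℝ}
    (hA : A.PosSemidef) (i : Fin m) : 0 ≤ A i i := by
  exact hA.diag_nonneg

theorem stmt_3 (n : ℕ) (M : Matrix (Fin n) (Fin n) ℝ) (hM : M.PosSemidef) :
    M.det ≤ ∏ i : Fin n, M i i := by
  have hdiag : ∀ i, 0 ≤ M i i := aux_diag_nonneg hM
  rcases le_or_gt M.det 0 with hd | hd
  · exact hd.trans (Finset.prod_nonneg fun i _ => hdiag i)
  -- all diagonal entries are positive
  have hpos : ∀ i, 0 < M i i := by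
    intro i
    rcases (hdiag i).lt_or_eq with h | h
    · exact h
    · exfalso
      have hx : M *ᵥ Pi.single i 1 = 0 := by
        rw [← hM.dotProduct_mulVec_zero_iff]
        simpa [dotProduct, mulVec, Pi.single_apply, Finset.sum_ite_eq] using h.symm
      have : M.det = 0 := by
        rw [← Matrix.exists_mulVec_eq_zero_iff]
        exact ⟨Pi.single i 1, by simp [Pi.single_eq_same, Function.ne_iff], hx⟩
      linarith
  set d : Fin n → ℝ := fun i => (Real.sqrt (M i i))⁻¹ with hd_def
  have hsqrt_pos : ∀ i, 0 < Real.sqrt (M i i) := fun i => Real.sqrt_pos.mpr (hpos i)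
  set D : Matrix (Fin n) (Fin n) ℝ := Matrix.diagonal d with hD_def
  have hDH : Dᴴ = D := by
    simp [hD_def, Matrix.diagonal_conjTranspose]
  set N : Matrix (Fin n) (Fin n) ℝ := D * M * D with hN_def
  have hN : N.PosSemidef := by
    have := hM.conjTranspose_mul_mul_same D
    rwa [hDH] at this
  have hNdiag : ∀ i, N i i = 1 := by
    intro i
    have : N i i = d i * M i i * d i := by
      simp [hN_def, hD_def, Matrix.mul_diagonal, Matrix.diagonal_mul]
    rw [this, hd_def]
    have h2 : Real.sqrt (M i i) * Real.sqrt (M i i) = M i i := Real.mul_self_sqrt (hdiag i)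
    rw [← h2]
    field_simp
    exact div_self (hsqrt_pos i).ne'
  -- eigenvalues of N
  set μ : Fin n → ℝ := hN.1.eigenvalues with hμ_def
  have hμ0 : ∀ i, 0 ≤ μ i := hN.eigenvalues_nonneg
  have hsum : ∑ i, μ i = n := by
    rw [← aux_trace_eq_sum_eigenvalues hN.1, Matrix.trace]
    simp [Matrix.diag, hNdiag]
  have hdetμ : N.det = ∏ i, μ i := by
    simpa using hN.1.det_eq_prod_eigenvalues
  -- det N ≤ 1 by AM-GM
  have hdetN_le : N.det ≤ 1 := by
    rcases Nat.eq_zero_or_pos n with h0 | h0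
    · subst h0; simp [hdetμ]
    · have hamgm := Real.geom_mean_le_arith_mean Finset.univ (fun _ => 1) μ
        (fun _ _ => zero_le_one) (by simp; positivity) (fun i _ => hμ0 i)
      simp only [Real.rpow_one, Finset.sum_const, Finset.card_univ, Fintype.card_fin,
        nsmul_eq_mul, mul_one, one_mul, hsum] at hamgm
      rw [div_self (by positivity : (n:ℝ) ≠ 0)] at hamgm
      rw [hdetμ]
      by_contra hgt
      push_neg at hgt
      have h1 : (1:ℝ) < (∏ i, μ i) ^ ((n:ℝ)⁻¹) := by
        rw [show (1:ℝ) = 1 ^ ((n:ℝ)⁻¹) by simp]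
        exact Real.rpow_lt_rpow zero_le_one hgt (by positivity)
      linarith
  -- compute det N
  have hdetN : N.det = M.det * ∏ i, (M i i)⁻¹ := by
    rw [hN_def, Matrix.det_mul, Matrix.det_mul, hD_def, Matrix.det_diagonal]
    rw [mul_comm (∏ i, d i) M.det, mul_assoc, ← Finset.prod_mul_distrib]
    congr 1
    refine Finset.prod_congr rfl fun i _ => ?_
    rw [hd_def]
    rw [← mul_inv, Real.mul_self_sqrt (hdiag i)]
  have hprod : 0 < ∏ i, M i i := Finset.prod_pos fun i _ => hpos i
  rw [hdetN, Finset.prod_inv_distrib, ← div_eq_mul_inv] at hdetN_le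
  exact (div_le_one hprod).mp hdetN_le
end

section
/- The set function A ↦ log det(I_{|A|} + α·L_A), where L is an n×n positive semi-definite matrix and L_A its principal submatrix indexed by A, is submodular: for A ⊆ B ⊆ {1,...,n} and i ∉ B, the marginal gain of adding i to A is at least the marginal gain of adding i to B. -/
open Matrix Finset

noncomputable def logDetSub9 (n : ℕ) (L : Matrix (Fin n) (Fin n) ℝ) (α : ℝ)
    (A : Finset (Fin n)) : ℝ :=
  Real.log (Matrix.det
    (1 + α • L.submatrix (Subtype.val : A → Fin n) (Subtype.val : A → Fin n)))

section Aux

variable {n : ℕ} (L : Matrix (Fin n) (Fin n) ℝ) (α : ℝ)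

noncomputable def Mmat9 (S : Finset (Fin n)) : Matrix S S ℝ :=
  1 + α • L.submatrix (Subtype.val : S → Fin n) (Subtype.val : S → Fin n)

variable {L α}

lemma Mmat9_posDef (hL : L.PosSemidef) (hα : 0 < α) (S : Finset (Fin n)) :
    (Mmat9 L α S).PosDef := by
  have hsub := hL.submatrix (Subtype.val : S → Fin n)
  refine Matrix.PosDef.add_posSemidef Matrix.PosDef.one (PosSemidef.of_dotProduct_mulVec_nonneg ?_ ?_)
  · unfold Matrix.IsHermitian
    rw [conjTranspose_smul]
    rw [hsub.1]
    simp
  · intro x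
    rw [smul_mulVec, dotProduct_smul, smul_eq_mul]
    exact mul_nonneg hα.le (hsub.dotProduct_mulVec_nonneg x)

lemma Mmat9_apply (S : Finset (Fin n)) (j k : {x // x ∈ S}) :
    Mmat9 L α S j k = (if (j : Fin n) = k then 1 else 0) + α * L j k := by
  simp [Mmat9, Matrix.one_apply]

lemma qform_eq (S : Finset (Fin n)) (x : Fin n → ℝ) :
    (fun j : S => x j) ⬝ᵥ (Mmat9 L α S) *ᵥ (fun j : S => x j)
      = ∑ j ∈ S, x j * ∑ k ∈ S, ((if j = k then (1:ℝ) else 0) + α * L j k) * x k := by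
  simp only [dotProduct, mulVec, Mmat9_apply]
  rw [← Finset.sum_coe_sort S
      (fun j => x j * ∑ k ∈ S, ((if j = k then (1:ℝ) else 0) + α * L j k) * x k)]
  refine Finset.sum_congr rfl fun j _ => ?_
  rw [← Finset.sum_coe_sort S (fun k => ((if (j:Fin n) = k then (1:ℝ) else 0) + α * L j k) * x k)]

lemma dot_eq (S : Finset (Fin n)) (g x : Fin n → ℝ) :
    (fun j : S => g j) ⬝ᵥ (fun j : S => x j) = ∑ j ∈ S, g j * x j := by
  simp only [dotProduct]
  exact Finset.sum_coe_sort S (fun j => g j * x j)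

lemma key_lb {m : Type*} [Fintype m] [DecidableEq m] {N : Matrix m m ℝ} (hN : N.PosDef)
    (w x : m → ℝ) : 2 * (w ⬝ᵥ x) - x ⬝ᵥ N *ᵥ x ≤ w ⬝ᵥ N⁻¹ *ᵥ w := by
  have hdet : IsUnit N.det := (Matrix.isUnit_iff_isUnit_det N).1 hN.isUnit
  set z := N⁻¹ *ᵥ w with hzdef
  have hz : N *ᵥ z = w := by
    rw [hzdef, mulVec_mulVec, Matrix.mul_nonsing_inv N hdet, one_mulVec]
  have hsymm : ∀ a b, N a b = N b a := by
    intro a b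
    conv_lhs => rw [← hN.1]
    simp [conjTranspose_apply]
  have hdot : ∀ a b : m → ℝ, a ⬝ᵥ N *ᵥ b = b ⬝ᵥ N *ᵥ a := by
    intro a b
    simp only [dotProduct, mulVec, Finset.mul_sum]
    rw [Finset.sum_comm]
    refine Finset.sum_congr rfl fun k _ => Finset.sum_congr rfl fun j _ => ?_
    rw [hsymm j k]; ring
  have h0 : 0 ≤ (x - z) ⬝ᵥ N *ᵥ (x - z) := by
    have := hN.posSemidef.dotProduct_mulVec_nonneg (x - z)
    simpa using this
  have hz2 : x ⬝ᵥ N *ᵥ z = w ⬝ᵥ x := by rw [hz]; exact dotProduct_comm x w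
  have hz3 : z ⬝ᵥ N *ᵥ x = w ⬝ᵥ x := by rw [hdot, hz2]
  have hz4 : z ⬝ᵥ N *ᵥ z = w ⬝ᵥ z := by rw [hz, dotProduct_comm]
  have e1 : (x - z) ⬝ᵥ N *ᵥ (x - z)
      = x ⬝ᵥ N *ᵥ x - 2 * (w ⬝ᵥ x) + w ⬝ᵥ z := by
    rw [mulVec_sub, dotProduct_sub, sub_dotProduct, sub_dotProduct, hz2, hz3, hz4]
    ring
  rw [e1] at h0
  linarith

lemma key_eq {m : Type*} [Fintype m] [DecidableEq m] {N : Matrix m m ℝ} (hN : N.PosDef)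
    (w : m → ℝ) :
    w ⬝ᵥ N⁻¹ *ᵥ w
      = 2 * (w ⬝ᵥ (N⁻¹ *ᵥ w)) - (N⁻¹ *ᵥ w) ⬝ᵥ N *ᵥ (N⁻¹ *ᵥ w) := by
  have hdet : IsUnit N.det := (Matrix.isUnit_iff_isUnit_det N).1 hN.isUnit
  have hz : N *ᵥ (N⁻¹ *ᵥ w) = w := by
    rw [mulVec_mulVec, Matrix.mul_nonsing_inv N hdet, one_mulVec]
  rw [hz, dotProduct_comm (N⁻¹ *ᵥ w) w]
  ring

def eIns9 {i : Fin n} {S : Finset (Fin n)} (hi : i ∉ S) :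
    Unit ⊕ {x // x ∈ S} ≃ {x : Fin n // x ∈ insert i S} where
  toFun := Sum.elim (fun _ => ⟨i, Finset.mem_insert_self i S⟩)
    (fun j => ⟨j, Finset.mem_insert_of_mem j.2⟩)
  invFun := fun x => if h : x.1 ∈ S then Sum.inr ⟨x.1, h⟩ else Sum.inl ()
  left_inv := by
    rintro (⟨⟩ | ⟨j, hj⟩)
    · simp [hi]
    · simp [hj]
  right_inv := by
    rintro ⟨x, hx⟩
    by_cases h : x ∈ S
    · simp [h]
    · have hxi : x = i := by
        rcases Finset.mem_insert.1 hx with h' | h'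
        · exact h'
        · exact absurd h' h
      subst hxi
      simp [h]

lemma det_insert9 (hL : L.PosSemidef) (hα : 0 < α) {i : Fin n} {S : Finset (Fin n)}
    (hi : i ∉ S) :
    (Mmat9 L α (insert i S)).det
      = (Mmat9 L α S).det *
        ((1 + α * L i i)
          - (fun j : S => α * L i j) ⬝ᵥ (Mmat9 L α S)⁻¹ *ᵥ (fun j : S => α * L j i)) := by
  classical
  have hPD := Mmat9_posDef hL hα S
  have hdet : IsUnit (Mmat9 L α S).det := (Matrix.isUnit_iff_isUnit_det _).1 hPD.isUnit
  haveI : Invertible (Mmat9 L α S) := (Mmat9 L α S).invertibleOfIsUnitDet hdet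
  set e := eIns9 hi
  set d : Matrix Unit Unit ℝ := fun _ _ => 1 + α * L i i with hd
  set b : Matrix Unit {x // x ∈ S} ℝ := fun _ j => α * L i j with hb
  set c : Matrix {x // x ∈ S} Unit ℝ := fun j _ => α * L j i with hc
  have hblock : (Mmat9 L α (insert i S)).submatrix e e
      = Matrix.fromBlocks d b c (Mmat9 L α S) := by
    ext j k
    rcases j with j | j <;> rcases k with k | k
    · simp [Matrix.submatrix_apply, Mmat9_apply, e, eIns9, hd, Matrix.fromBlocks_apply₁₁]; rfl
    · have : i ≠ (k : Fin n) := fun h => hi (h ▸ k.2)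
      simp [Matrix.submatrix_apply, Mmat9_apply, e, eIns9, hb, this, Matrix.fromBlocks_apply₁₂]; rfl
    · have : (j : Fin n) ≠ i := fun h => hi (h ▸ j.2)
      simp [Matrix.submatrix_apply, Mmat9_apply, e, eIns9, hc, this, Matrix.fromBlocks_apply₂₁]; rfl
    · simp [Matrix.submatrix_apply, Mmat9_apply, e, eIns9]
  have hdetc : (Mmat9 L α (insert i S)).det
      = ((Mmat9 L α (insert i S)).submatrix e e).det :=
    (Matrix.det_submatrix_equiv_self e _).symm
  rw [hdetc, hblock, Matrix.det_fromBlocks₂₂, Matrix.invOf_eq_nonsing_inv]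
  congr 1
  rw [Matrix.det_unique]
  have hmm : (b * (Mmat9 L α S)⁻¹ * c) default default
      = (fun j : S => α * L i j) ⬝ᵥ (Mmat9 L α S)⁻¹ *ᵥ (fun j : S => α * L j i) := by
    simp only [Matrix.mul_apply, dotProduct, mulVec, Finset.sum_mul, Finset.mul_sum]
    rw [Finset.sum_comm]
    refine Finset.sum_congr rfl fun j _ => Finset.sum_congr rfl fun k _ => ?_
    simp only [hb, hc]
    ring
  rw [Matrix.sub_apply, hmm]

end Aux

theorem stmt_9 (n : ℕ) (L : Matrix (Fin n) (Fin n) ℝ) (hL : L.PosSemidef) (α : ℝ)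
    (hα : 0 < α) (A B : Finset (Fin n)) (hAB : A ⊆ B) (i : Fin n) (hi : i ∉ B) :
    logDetSub9 n L α (insert i B) - logDetSub9 n L α B ≤
      logDetSub9 n L α (insert i A) - logDetSub9 n L α A := by
  classical
  have hiA : i ∉ A := fun h => hi (hAB h)
  have hLsymm : ∀ j k, L j k = L k j := by
    intro j k
    conv_lhs => rw [← hL.1]
    simp [conjTranspose_apply]
  -- identify logDetSub9 with Mmat9 determinant
  have hlds : ∀ S : Finset (Fin n), logDetSub9 n L α S = Real.log (Mmat9 L α S).det :=
    fun S => rfl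
  -- schur scalar
  set q : Finset (Fin n) → ℝ := fun S =>
    (fun j : S => α * L i j) ⬝ᵥ (Mmat9 L α S)⁻¹ *ᵥ (fun j : S => α * L i j) with hq
  have hvec : ∀ S : Finset (Fin n),
      (fun j : S => α * L (j : Fin n) i) = (fun j : S => α * L i j) := by
    intro S; funext j; rw [hLsymm]
  have hdetins : ∀ (S : Finset (Fin n)), i ∉ S →
      (Mmat9 L α (insert i S)).det = (Mmat9 L α S).det * ((1 + α * L i i) - q S) := by
    intro S hiS
    rw [det_insert9 hL hα hiS, hvec S]
  have hdpos : ∀ S : Finset (Fin n), 0 < (Mmat9 L α S).det :=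
    fun S => (Mmat9_posDef hL hα S).det_pos
  have hcpos : ∀ (S : Finset (Fin n)), i ∉ S → 0 < (1 + α * L i i) - q S := by
    intro S hiS
    have h1 := hdetins S hiS
    have h2 := hdpos (insert i S)
    rw [h1] at h2
    rcases mul_pos_iff.1 h2 with ⟨_, hc⟩ | ⟨hd, _⟩
    · exact hc
    · exact absurd (hdpos S) (not_lt.2 hd.le)
  -- marginal gains
  have hmarg : ∀ (S : Finset (Fin n)), i ∉ S →
      logDetSub9 n L α (insert i S) - logDetSub9 n L α S
        = Real.log ((1 + α * L i i) - q S) := by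
    intro S hiS
    rw [hlds, hlds, hdetins S hiS,
      Real.log_mul (hdpos S).ne' (hcpos S hiS).ne']
    ring
  rw [hmarg B hi, hmarg A hiA]
  -- key inequality : q A ≤ q B
  have hqAB : q A ≤ q B := by
    set u : Fin n → ℝ := fun j => α * L i j with hu
    set z : ({x // x ∈ A} → ℝ) := (Mmat9 L α A)⁻¹ *ᵥ (fun j : A => u j) with hz
    set x : Fin n → ℝ := fun j => if h : j ∈ A then z ⟨j, h⟩ else 0 with hx
    have hxA : (fun j : A => x j) = z := by
      funext j
      simp only [hx, dif_pos j.2, Subtype.coe_eta]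
    have hx0 : ∀ j, j ∉ A → x j = 0 := by
      intro j hj
      simp only [hx, dif_neg hj]
    have hsum1 : ∑ j ∈ A, u j * x j = ∑ j ∈ B, u j * x j :=
      Finset.sum_subset hAB (fun j _ hj => by rw [hx0 j hj, mul_zero])
    have hsum2 : ∑ j ∈ B, x j * ∑ k ∈ B, ((if j = k then (1:ℝ) else 0) + α * L j k) * x k
        = ∑ j ∈ A, x j * ∑ k ∈ A, ((if j = k then (1:ℝ) else 0) + α * L j k) * x k := by
      rw [← Finset.sum_subset hAB (fun j _ hj => by rw [hx0 j hj, zero_mul])]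
      refine Finset.sum_congr rfl fun j hj => ?_
      congr 1
      exact (Finset.sum_subset hAB (fun k _ hk => by rw [hx0 k hk, mul_zero])).symm
    have hQA : q A = 2 * ((fun j : A => u j) ⬝ᵥ (fun j : A => x j))
        - (fun j : A => x j) ⬝ᵥ (Mmat9 L α A) *ᵥ (fun j : A => x j) := by
      rw [hxA]
      exact key_eq (Mmat9_posDef hL hα A) _
    have hQA2 : q A = 2 * ((fun j : B => u j) ⬝ᵥ (fun j : B => x j))
        - (fun j : B => x j) ⬝ᵥ (Mmat9 L α B) *ᵥ (fun j : B => x j) := by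
      rw [hQA, dot_eq, dot_eq, qform_eq, qform_eq, hsum1, hsum2]
    rw [hQA2]
    exact key_lb (Mmat9_posDef hL hα B) _ _
  have hle : (1 + α * L i i) - q B ≤ (1 + α * L i i) - q A := by linarith
  exact Real.log_le_log (hcpos B hi) hle
end

section
/- For Z ∈ ℝ^{d×n} partitioned by a family of disjoint index sets C_1,...,C_c covering {1,...,n}, with |C_i| = n_i, the quantity R(Z) − Σ_i (n_i/n)·R_i, where R(Z) = (1/2) log det(I + (d/(n ε²)) Z Zᵀ) and R_i = (1/2) log det(I + (d/(n_i ε²)) Z_{C_i} Z_{C_i}ᵀ), is nonnegative. -/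
open Matrix Finset

open Matrix Finset

variable {m : Type*} [Fintype m] [DecidableEq m]

lemma psd_smul {A : Matrix m m ℝ} {c : ℝ} (hc : 0 ≤ c) (hA : A.PosSemidef) :
    (c • A).PosSemidef := by
  refine ⟨?_, fun x => ?_⟩
  · unfold Matrix.IsHermitian
    rw [conjTranspose_smul, hA.1.eq]
    simp
  · exact (hA.smul hc).2 x

lemma pd_smul {A : Matrix m m ℝ} {c : ℝ} (hc : 0 < c) (hA : A.PosDef) :
    (c • A).PosDef := by
  refine ⟨(psd_smul hc.le hA.posSemidef).1, fun x hx => ?_⟩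
  exact (hA.smul hc).2 hx

open scoped MatrixOrder in
/-- Key two-point concavity inequality for `log det` on positive definite matrices. -/
lemma logdet_concave_pair {A B : Matrix m m ℝ} (hA : A.PosDef) (hB : B.PosDef)
    {a b : ℝ} (ha : 0 < a) (hb : 0 < b) (hab : a + b = 1) :
    a * Real.log A.det + b * Real.log B.det ≤ Real.log (a • A + b • B).det := by
  classical
  set S := CFC.sqrt A with hSdef
  have hS : S.PosSemidef := Matrix.nonneg_iff_posSemidef.mp (CFC.sqrt_nonneg A)
  have hSH : S.IsHermitian := hS.isHermitian
  have hSS : S * S = A := CFC.sqrt_mul_sqrt_self A hA.posSemidef.nonneg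
  have hdetA : 0 < A.det := hA.det_pos
  have hdetB : 0 < B.det := hB.det_pos
  have detS2 : S.det * S.det = A.det := by rw [← det_mul, hSS]
  have hdetS : S.det ≠ 0 := by
    intro h; rw [h, mul_zero] at detS2; exact hdetA.ne detS2
  have hSunit : IsUnit S.det := isUnit_iff_ne_zero.mpr hdetS
  set M := S⁻¹ * B * S⁻¹ with hMdef
  have hSinvH : (S⁻¹).IsHermitian := hSH.inv
  have hM : M.PosSemidef := by
    have := hB.posSemidef.mul_mul_conjTranspose_same S⁻¹
    rwa [hSinvH.eq] at this
  have hMdet : M.det = B.det / A.det := by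
    rw [hMdef, det_mul, det_mul, det_nonsing_inv, Ring.inverse_eq_inv', ← detS2]
    field_simp
  have hSMS : S * M * S = B := by
    have h1 : S * M * S = (S * S⁻¹) * B * (S⁻¹ * S) := by
      simp only [hMdef, Matrix.mul_assoc]
    rw [h1, Matrix.mul_nonsing_inv _ hSunit, Matrix.nonsing_inv_mul _ hSunit,
      Matrix.one_mul, Matrix.mul_one]
  have hkey : a • A + b • B = S * (a • (1 : Matrix m m ℝ) + b • M) * S := by
    rw [Matrix.mul_add, Matrix.add_mul, Matrix.mul_smul, Matrix.smul_mul,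
      Matrix.mul_smul, Matrix.smul_mul, Matrix.mul_one, hSS, hSMS]
  -- spectral theorem for M
  set μ := hM.1.eigenvalues with hμdef
  set U : Matrix m m ℝ := (hM.1.eigenvectorUnitary : Matrix m m ℝ) with hUdef
  have hUU : U * star U = 1 := (Matrix.mem_unitaryGroup_iff).mp hM.1.eigenvectorUnitary.2
  have hUs : star U * U = 1 := (Matrix.mem_unitaryGroup_iff').mp hM.1.eigenvectorUnitary.2
  have spec : M = U * diagonal (RCLike.ofReal ∘ μ) * star U := hM.1.spectral_theorem
  have hdiag : a • (1 : Matrix m m ℝ) + b • M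
      = U * diagonal (fun i => a + b * μ i) * star U := by
    have h1 : diagonal (fun i : m => a + b * μ i)
        = a • (1 : Matrix m m ℝ) + b • diagonal (RCLike.ofReal ∘ μ) := by
      rw [← diagonal_one, ← diagonal_smul, ← diagonal_smul, diagonal_add]
      congr 1
      funext i
      simp [mul_comm]
    rw [h1, Matrix.mul_add, Matrix.add_mul, Matrix.mul_smul, Matrix.smul_mul,
      Matrix.mul_smul, Matrix.smul_mul, Matrix.mul_one, hUU, ← spec]
  have hdet1 : (a • (1 : Matrix m m ℝ) + b • M).det = ∏ i, (a + b * μ i) := by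
    rw [hdiag, det_mul, det_mul, mul_comm, ← mul_assoc, ← det_mul, hUs, det_one, one_mul,
      det_diagonal]
  have hμnn : ∀ i, 0 ≤ μ i := fun i => hM.eigenvalues_nonneg i
  have hMdet' : M.det = ∏ i, μ i := by
    have := hM.1.det_eq_prod_eigenvalues
    simpa using this
  -- AM-GM
  have hamgm : (M.det) ^ b ≤ ∏ i, (a + b * μ i) := by
    rw [hMdet', ← Real.finset_prod_rpow _ _ (fun i _ => hμnn i) b]
    refine Finset.prod_le_prod (fun i _ => Real.rpow_nonneg (hμnn i) b) (fun i _ => ?_)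
    have := Real.geom_mean_le_arith_mean2_weighted ha.le hb.le zero_le_one (hμnn i) hab
    simpa using this
  have hdet2 : (a • A + b • B).det = A.det * ∏ i, (a + b * μ i) := by
    rw [hkey, det_mul, det_mul, mul_comm, ← mul_assoc, mul_comm S.det, detS2, hdet1]
  have hq : (0 : ℝ) < B.det / A.det := div_pos hdetB hdetA
  have hlb : A.det * (B.det / A.det) ^ b ≤ (a • A + b • B).det := by
    rw [hdet2, ← hMdet]
    exact mul_le_mul_of_nonneg_left (hMdet ▸ hamgm) hdetA.le
  have hlbpos : (0 : ℝ) < A.det * (B.det / A.det) ^ b :=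
    mul_pos hdetA (Real.rpow_pos_of_pos hq b)
  calc a * Real.log A.det + b * Real.log B.det
      = Real.log (A.det * (B.det / A.det) ^ b) := by
        rw [Real.log_mul hdetA.ne' (Real.rpow_pos_of_pos hq b).ne',
          Real.log_rpow hq, Real.log_div hdetB.ne' hdetA.ne']
        have hba : a = 1 - b := by linarith
        rw [hba]; ring
    _ ≤ Real.log (a • A + b • B).det := Real.log_le_log hlbpos hlb

lemma logdet_concaveOn (k : ℕ) :
    ConcaveOn ℝ {M : Matrix (Fin k) (Fin k) ℝ | M.PosDef}
      (fun M => Real.log M.det) := by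
  constructor
  · intro A hA B hB a b ha hb hab
    rcases eq_or_lt_of_le ha with ha0 | ha0
    · have hb1 : b = 1 := by linarith
      simpa [← ha0, hb1] using hB
    rcases eq_or_lt_of_le hb with hb0 | hb0
    · have ha1 : a = 1 := by linarith
      simpa [← hb0, ha1] using hA
    exact (pd_smul ha0 hA).add (pd_smul hb0 hB)
  · intro A hA B hB a b ha hb hab
    rcases eq_or_lt_of_le ha with ha0 | ha0
    · have hb1 : b = 1 := by linarith
      simp [← ha0, hb1]
    rcases eq_or_lt_of_le hb with hb0 | hb0
    · have ha1 : a = 1 := by linarith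
      simp [← hb0, ha1]
    simpa [smul_eq_mul] using logdet_concave_pair hA hB ha0 hb0 hab


theorem stmt_10 (d n c : ℕ) (hn : 0 < n) (Z : Matrix (Fin d) (Fin n) ℝ)
    (ε : ℝ) (hε : 0 < ε) (C : Fin c → Finset (Fin n))
    (hdisj : ∀ i j, i ≠ j → Disjoint (C i) (C j))
    (hcover : ∀ x : Fin n, ∃ i, x ∈ C i)
    (hne : ∀ i, (C i).Nonempty) :
    0 ≤ (1 / 2 : ℝ) * Real.log (Matrix.det (1 + ((d : ℝ) / (n * ε ^ 2)) • (Z * Zᵀ))) -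
      ∑ i : Fin c, (((C i).card : ℝ) / (n : ℝ)) *
        ((1 / 2 : ℝ) * Real.log (Matrix.det (1 + ((d : ℝ) / ((C i).card * ε ^ 2)) •
          (Z.submatrix id (Subtype.val : (C i) → Fin n) *
            (Z.submatrix id (Subtype.val : (C i) → Fin n))ᵀ)))) := by
  classical
  set Zi : ∀ i : Fin c, Matrix (Fin d) (C i) ℝ :=
    fun i => Z.submatrix id (Subtype.val : (C i) → Fin n) with hZidef
  set X : Fin c → Matrix (Fin d) (Fin d) ℝ := fun i => Zi i * (Zi i)ᵀ with hXdef
  set w : Fin c → ℝ := fun i => ((C i).card : ℝ) / n with hwdef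
  set P : Fin c → Matrix (Fin d) (Fin d) ℝ :=
    fun i => 1 + ((d : ℝ) / ((C i).card * ε ^ 2)) • X i with hPdef
  have hcard : ∀ i, 0 < ((C i).card : ℝ) := fun i => by
    exact_mod_cast (hne i).card_pos
  have hnR : (0 : ℝ) < n := by exact_mod_cast hn
  -- the union is everything
  have huniv : (Finset.univ : Finset (Fin n)) = Finset.univ.biUnion C := by
    ext x
    simp only [Finset.mem_univ, Finset.mem_biUnion, true_iff]
    obtain ⟨i, hi⟩ := hcover x
    exact ⟨i, trivial, hi⟩
  have hdisj' : ∀ i ∈ (Finset.univ : Finset (Fin c)), ∀ j ∈ Finset.univ, i ≠ j →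
      Disjoint (C i) (C j) := fun i _ j _ h => hdisj i j h
  have hsumcard : ∑ i, ((C i).card : ℝ) = n := by
    have h1 : (Finset.univ.biUnion C).card = ∑ i, (C i).card :=
      Finset.card_biUnion hdisj'
    have h2 : (Finset.univ : Finset (Fin n)).card = n := by simp
    rw [huniv] at h2
    rw [h1] at h2
    exact_mod_cast congrArg (Nat.cast : ℕ → ℝ) h2
  have hw1 : ∑ i, w i = 1 := by
    rw [hwdef]
    rw [← Finset.sum_div, hsumcard, div_self hnR.ne']
  have hwnn : ∀ i, 0 ≤ w i := fun i => div_nonneg (hcard i).le hnR.le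
  -- positive semidefiniteness
  have hXpsd : ∀ i, (X i).PosSemidef := fun i => by
    have := Matrix.posSemidef_self_mul_conjTranspose (Zi i)
    rwa [conjTranspose_eq_transpose_of_trivial] at this
  have hcoef : ∀ i, (0 : ℝ) ≤ (d : ℝ) / ((C i).card * ε ^ 2) := fun i =>
    div_nonneg (Nat.cast_nonneg d) (by positivity)
  have hPpd : ∀ i, (P i).PosDef := fun i =>
    Matrix.PosDef.one.add_posSemidef (psd_smul (hcoef i) (hXpsd i))
  -- sum of the blocks
  have hZZ : ∑ i, X i = Z * Zᵀ := by
    ext a b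
    rw [Matrix.sum_apply]
    have hXi : ∀ i, X i a b = ∑ k ∈ C i, Z a k * Z b k := fun i => by
      rw [hXdef]
      simp only [Matrix.mul_apply, Matrix.transpose_apply, Matrix.submatrix_apply, id_eq]
      rw [← Finset.sum_attach (C i) (fun k => Z a k * Z b k), Finset.univ_eq_attach]
      rfl
    simp only [hXi]
    rw [← Finset.sum_biUnion hdisj', ← huniv]
    simp [Matrix.mul_apply]
  have hsmul_sum : ∑ i, w i • P i = 1 + ((d : ℝ) / (n * ε ^ 2)) • (Z * Zᵀ) := by
    have hterm : ∀ i, w i • P i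
        = w i • (1 : Matrix (Fin d) (Fin d) ℝ) + ((d : ℝ) / (n * ε ^ 2)) • X i := by
      intro i
      rw [hPdef, smul_add, smul_smul]
      congr 2
      rw [hwdef]
      field_simp
    calc ∑ i, w i • P i
        = ∑ i, (w i • (1 : Matrix (Fin d) (Fin d) ℝ) + ((d : ℝ) / (n * ε ^ 2)) • X i) :=
          Finset.sum_congr rfl (fun i _ => hterm i)
      _ = (∑ i, w i) • (1 : Matrix (Fin d) (Fin d) ℝ)
            + ((d : ℝ) / (n * ε ^ 2)) • ∑ i, X i := by
          rw [Finset.sum_add_distrib, ← Finset.sum_smul, ← Finset.smul_sum]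
      _ = 1 + ((d : ℝ) / (n * ε ^ 2)) • (Z * Zᵀ) := by rw [hw1, one_smul, hZZ]
  -- Jensen
  have hj := (logdet_concaveOn d).le_map_sum (t := Finset.univ)
    (fun i _ => hwnn i) hw1 (fun i _ => hPpd i)
  rw [hsmul_sum] at hj
  have key : ∑ i : Fin c, w i * ((1 / 2 : ℝ) * Real.log (P i).det)
      ≤ (1 / 2 : ℝ) * Real.log (1 + ((d : ℝ) / (n * ε ^ 2)) • (Z * Zᵀ)).det := by
    calc ∑ i : Fin c, w i * ((1 / 2 : ℝ) * Real.log (P i).det)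
        = (1 / 2 : ℝ) * ∑ i : Fin c, w i * Real.log (P i).det := by
          rw [Finset.mul_sum]
          exact Finset.sum_congr rfl (fun i _ => by ring)
      _ ≤ (1 / 2 : ℝ) * Real.log (1 + ((d : ℝ) / (n * ε ^ 2)) • (Z * Zᵀ)).det := by
          refine mul_le_mul_of_nonneg_left ?_ (by norm_num)
          simpa [smul_eq_mul] using hj
    all_goals exact le_rfl
  rw [sub_nonneg]
  exact key
end
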